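/- (Appendix lemma: accountable safety with acknowledgments.) Let V₁, V₂ be sets of FFG-votes and A₁, A₂ sets of acks among n validators. If 𝒞₁ is finalized-with-acks w.r.t. (V₁, A₁), 𝒞₂ is finalized-with-acks w.r.t. (V₂, A₂), and 𝒞₁.chain conflicts with 𝒞₂.chain, then the set of validators that violate E1 or E2 w.r.t. V₁ ∪ V₂, or E3 w.r.t. (V₁ ∪ V₂, A₁ ∪ A₂), has cardinality m with 3·m ≥ n. -/

import Mathlib

structure Block (β : Type) where
  body : β
  p : ℤ

def genesisBlock {β : Type} (g : β) : Block β := ⟨g, -1⟩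

structure Chain (β : Type) (g : β) where
  blocks : List (Block β)
  ne : blocks ≠ []
  head_genesis : blocks.head? = some (genesisBlock g)
  strict : List.Chain' (fun a b => a.p < b.p) blocks

namespace Chain

variable {β : Type} {g : β}

/-- The height of a chain: the slot of its last block. -/
def height (χ : Chain β g) : ℤ := (χ.blocks.getLast χ.ne).p

/-- `χ₁ ⪯ χ₂`: `χ₁` is a prefix of `χ₂`. -/
def IsPrefix (χ₁ χ₂ : Chain β g) : Prop := χ₁.blocks <+: χ₂.blocks

/-- Two chains conflict if neither is a prefix of the other. -/
def Conflicts (χ₁ χ₂ : Chain β g) : Prop := ¬ χ₁.IsPrefix χ₂ ∧ ¬ χ₂.IsPrefix χ₁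

end Chain

def genesisChain {β : Type} (g : β) : Chain β g where
  blocks := [genesisBlock g]
  ne := by simp
  head_genesis := rfl
  strict := List.isChain_singleton _

structure Checkpoint (β : Type) (g : β) where
  chain : Chain β g
  c : ℕ
  height_le : chain.height ≤ (c : ℤ)

def genesisCheckpoint {β : Type} (g : β) : Checkpoint β g where
  chain := genesisChain g
  c := 0
  height_le := by simp [Chain.height, genesisChain, genesisBlock]

namespace Checkpoint

variable {β : Type} {g : β}

/-- Lexicographic order on checkpoints: `𝒞 ≤ 𝒞′`. -/
def le (C C' : Checkpoint β g) : Prop :=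
  C.c < C'.c ∨ (C.c = C'.c ∧ C.chain.height ≤ C'.chain.height)

/-- Strict lexicographic order on checkpoints: `𝒞 < 𝒞′`. -/
def lt (C C' : Checkpoint β g) : Prop :=
  C.c < C'.c ∨ (C.c = C'.c ∧ C.chain.height < C'.chain.height)

end Checkpoint

structure FFGVote (n : ℕ) (β : Type) (g : β) where
  source : Checkpoint β g
  target : Checkpoint β g
  sender : Fin n

def FFGVote.Valid {n : ℕ} {β : Type} {g : β} (m : FFGVote n β g) : Prop :=
  m.source.chain.IsPrefix m.target.chain ∧ m.source.c < m.target.c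

/-- The set of senders of a set of votes. -/
def senders {n : ℕ} {β : Type} {g : β} (M : Set (FFGVote n β g)) : Set (Fin n) :=
  {v | ∃ m ∈ M, m.sender = v}

/-- A checkpoint is justified w.r.t. a set of votes `V`. -/
inductive Justified {n : ℕ} {β : Type} {g : β} (V : Set (FFGVote n β g)) :
    Checkpoint β g → Prop
  | genesis : Justified V (genesisCheckpoint g)
  | step (C : Checkpoint β g) (M : Set (FFGVote n β g))
      (hMV : M ⊆ V)
      (hcard : 2 * n ≤ 3 * (senders M).ncard)
      (hjust : ∀ m ∈ M, Justified V m.source)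
      (hvotes : ∀ m ∈ M, m.Valid ∧
        m.source.chain.IsPrefix C.chain ∧ C.chain.IsPrefix m.target.chain ∧
        m.target.c = C.c) :
      Justified V C

/-- A checkpoint is finalized w.r.t. a set of votes `V`. -/
def Finalized {n : ℕ} {β : Type} {g : β} (V : Set (FFGVote n β g))
    (C : Checkpoint β g) : Prop :=
  C = genesisCheckpoint g ∨
    (Justified V C ∧ ∃ M ⊆ V, 2 * n ≤ 3 * (senders M).ncard ∧
      ∀ m ∈ M, m.Valid ∧ m.source = C ∧ m.target.c = C.c + 1)

/-- E1 (double voting). -/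
def ViolatesE1 {n : ℕ} {β : Type} {g : β} (V : Set (FFGVote n β g)) (v : Fin n) : Prop :=
  ∃ m₁ ∈ V, ∃ m₂ ∈ V, m₁.sender = v ∧ m₂.sender = v ∧ m₁ ≠ m₂ ∧
    m₁.target.c = m₂.target.c

/-- E2 (surround voting). -/
def ViolatesE2 {n : ℕ} {β : Type} {g : β} (V : Set (FFGVote n β g)) (v : Fin n) : Prop :=
  ∃ m₁ ∈ V, ∃ m₂ ∈ V, m₁.sender = v ∧ m₂.sender = v ∧
    m₂.source.lt m₁.source ∧ m₁.target.c < m₂.target.c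

structure Ack (n : ℕ) (β : Type) (g : β) where
  cp : Checkpoint β g
  sender : Fin n

/-- E3 (ack surround). -/
def ViolatesE3 {n : ℕ} {β : Type} {g : β} (V : Set (FFGVote n β g))
    (A : Set (Ack n β g)) (v : Fin n) : Prop :=
  ∃ m ∈ V, ∃ a ∈ A, m.sender = v ∧ a.sender = v ∧
    m.source.lt a.cp ∧ a.cp.c < m.target.c

/-- Finalized with acknowledgments. -/
def FinalizedWithAcks {n : ℕ} {β : Type} {g : β} (V : Set (FFGVote n β g))
    (A : Set (Ack n β g)) (C : Checkpoint β g) : Prop :=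
  Finalized V C ∨
    (Justified V C ∧ 2 * n ≤ 3 * (Set.ncard {v : Fin n | (⟨C, v⟩ : Ack n β g) ∈ A}))


section AuxAS

variable {n : ℕ} {β : Type} {g : β}

lemma genesis_prefix (χ : Chain β g) : (genesisChain g).IsPrefix χ := by
  obtain ⟨bs, ne, hg, st⟩ := χ
  cases bs with
  | nil => exact absurd rfl ne
  | cons a t =>
    simp only [List.head?_cons, Option.some.injEq] at hg
    show (genesisChain g).blocks <+: a :: t
    exact ⟨t, by simp [genesisChain, hg]⟩

lemma pre_trans {χ₁ χ₂ χ₃ : Chain β g} (h₁ : χ₁.IsPrefix χ₂) (h₂ : χ₂.IsPrefix χ₃) :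
    χ₁.IsPrefix χ₃ := List.IsPrefix.trans h₁ h₂

lemma not_conflicts {χ₁ χ₂ : Chain β g} (h : ¬ χ₁.Conflicts χ₂) :
    χ₁.IsPrefix χ₂ ∨ χ₂.IsPrefix χ₁ := by
  by_contra hc
  push_neg at hc
  exact h ⟨hc.1, hc.2⟩

lemma last_slot_lt {l₁ l₂ : List (Block β)} (h₁ : l₁ ≠ []) (h₂ : l₂ ≠ [])
    (hst : List.Chain' (fun a b => a.p < b.p) l₂) (hpre : l₁ <+: l₂) (hne : l₁ ≠ l₂) :
    (l₁.getLast h₁).p < (l₂.getLast h₂).p := by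
  obtain ⟨t, ht⟩ := hpre
  subst ht
  have htne : t ≠ [] := by
    rintro rfl
    exact hne (by simp)
  haveI : IsTrans (Block β) (fun a b => a.p < b.p) := ⟨fun _ _ _ h1 h2 => lt_trans h1 h2⟩
  have hp : List.Pairwise (fun a b : Block β => a.p < b.p) (l₁ ++ t) :=
    List.isChain_iff_pairwise.mp hst
  have h3 := (List.pairwise_append.mp hp).2.2
  have hb : (l₁ ++ t).getLast h₂ ∈ t := by
    have e : (l₁ ++ t).getLast h₂ = t.getLast htne := List.getLast_append_of_ne_nil _ htne
    rw [e]
    exact List.getLast_mem htne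
  exact h3 _ (List.getLast_mem h₁) _ hb

lemma height_lt_of_proper {χ₁ χ₂ : Chain β g} (h : χ₁.IsPrefix χ₂)
    (hne : χ₁.blocks ≠ χ₂.blocks) : χ₁.height < χ₂.height :=
  last_slot_lt χ₁.ne χ₂.ne χ₂.strict h hne

lemma exists_honest {n : ℕ} (E s₁ s₂ : Set (Fin n)) (h1 : 2 * n ≤ 3 * s₁.ncard)
    (h2 : 2 * n ≤ 3 * s₂.ncard) (hE : 3 * E.ncard < n) :
    ∃ v, v ∈ s₁ ∧ v ∈ s₂ ∧ v ∉ E := by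
  have hu : (s₁ ∪ s₂).ncard ≤ n := by
    have h := Set.ncard_le_ncard (Set.subset_univ (s₁ ∪ s₂)) Set.finite_univ
    simpa [Set.ncard_univ] using h
  have hie := Set.ncard_union_add_ncard_inter s₁ s₂ (Set.toFinite _) (Set.toFinite _)
  have hsub : ¬ (s₁ ∩ s₂ ⊆ E) := fun hs =>
    absurd (Set.ncard_le_ncard hs (Set.toFinite _)) (by omega)
  obtain ⟨v, hv, hvE⟩ := Set.not_subset.mp hsub
  exact ⟨v, hv.1, hv.2, hvE⟩

lemma justified_inv {V : Set (FFGVote n β g)} {C : Checkpoint β g}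
    (h : Justified V C) (hne : C ≠ genesisCheckpoint g) :
    ∃ M, M ⊆ V ∧ 2 * n ≤ 3 * (senders M).ncard ∧
      ∀ m ∈ M, m.Valid ∧ m.source.chain.IsPrefix C.chain ∧
        C.chain.IsPrefix m.target.chain ∧ m.target.c = C.c := by
  cases h with
  | genesis => exact absurd rfl hne
  | step C M hMV hcard hjust hvotes => exact ⟨M, hMV, hcard, hvotes⟩

lemma key {n : ℕ} {β : Type} {g : β}
    {V V₁ V₂ : Set (FFGVote n β g)} {A A₁ : Set (Ack n β g)}
    (hV₁ : V₁ ⊆ V) (hV₂ : V₂ ⊆ V) (hA₁ : A₁ ⊆ A)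
    {E : Set (Fin n)}
    (hE1 : ∀ v, ViolatesE1 V v → v ∈ E)
    (hE2 : ∀ v, ViolatesE2 V v → v ∈ E)
    (hE3 : ∀ v, ViolatesE3 V A v → v ∈ E)
    (hE : 3 * E.ncard < n)
    (C₁ : Checkpoint β g) (h₁ : FinalizedWithAcks V₁ A₁ C₁)
    {D : Checkpoint β g} (hD : Justified V₂ D) :
    (D.c = C₁.c → ¬ D.chain.Conflicts C₁.chain) ∧
    (C₁.c < D.c → C₁.chain.IsPrefix D.chain) := by
  by_cases hCg : C₁ = genesisCheckpoint g
  · subst hCg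
    exact ⟨fun _ hc => hc.2 (genesis_prefix _), fun _ => genesis_prefix _⟩
  have hJ₁ : Justified V₁ C₁ := by
    rcases h₁ with ((h | h) | h)
    · exact absurd h hCg
    · exact h.1
    · exact h.1
  obtain ⟨M₁, hM₁V, hcard₁, hvotes₁⟩ := justified_inv hJ₁ hCg
  have hfin : (∃ M, M ⊆ V₁ ∧ (2 * n ≤ 3 * (senders M).ncard ∧
        ∀ m ∈ M, m.Valid ∧ m.source = C₁ ∧ m.target.c = C₁.c + 1)) ∨
      2 * n ≤ 3 * (Set.ncard {v : Fin n | (⟨C₁, v⟩ : Ack n β g) ∈ A₁}) := by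
    rcases h₁ with ((h | h) | h)
    · exact absurd h hCg
    · obtain ⟨M, hM, hh1, hh2⟩ := h.2
      exact Or.inl ⟨M, hM, hh1, hh2⟩
    · exact Or.inr h.2
  induction hD with
  | genesis =>
    constructor
    · intro _ hc
      exact hc.1 (genesis_prefix _)
    · intro h
      exact absurd h (by simp [genesisCheckpoint])
  | step D M₂ hM₂V hcard₂ hjust₂ hvotes₂ ih =>
    constructor
    · intro hc hcf
      obtain ⟨v, hv₁, hv₂, hvE⟩ := exists_honest E (senders M₁) (senders M₂) hcard₁ hcard₂ hE
      obtain ⟨m₁, hm₁, hs₁⟩ := hv₁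
      obtain ⟨m₂, hm₂, hs₂⟩ := hv₂
      by_cases hmm : m₁ = m₂
      · subst hmm
        obtain ⟨-, -, hpre₁, -⟩ := hvotes₁ m₁ hm₁
        obtain ⟨-, -, hpre₂, -⟩ := hvotes₂ m₁ hm₂
        rcases List.prefix_or_prefix_of_prefix hpre₂ hpre₁ with h | h
        · exact hcf.1 h
        · exact hcf.2 h
      · refine hvE (hE1 v ⟨m₁, hV₁ (hM₁V hm₁), m₂, hV₂ (hM₂V hm₂), hs₁, hs₂, hmm, ?_⟩)
        rw [(hvotes₁ m₁ hm₁).2.2.2, (hvotes₂ m₂ hm₂).2.2.2, hc]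
    · intro hlt
      rcases hfin with ⟨Mf, hMfV, hcardf, hvotesf⟩ | hack
      · obtain ⟨v, hvf, hv₂, hvE⟩ := exists_honest E (senders Mf) (senders M₂) hcardf hcard₂ hE
        obtain ⟨m₁, hm₁, hs₁⟩ := hvf
        obtain ⟨m₂, hm₂, hs₂⟩ := hv₂
        obtain ⟨hval₁, hsrc₁, htc₁⟩ := hvotesf m₁ hm₁
        obtain ⟨hval₂, hpre₂s, hpre₂t, htc₂⟩ := hvotes₂ m₂ hm₂
        by_cases hmm : m₁ = m₂
        · subst hmm
          rw [hsrc₁] at hpre₂s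
          exact hpre₂s
        by_cases htt : m₁.target.c = m₂.target.c
        · exact absurd (hE1 v ⟨m₁, hV₁ (hMfV hm₁), m₂, hV₂ (hM₂V hm₂), hs₁, hs₂, hmm, htt⟩) hvE
        have htlt : m₁.target.c < m₂.target.c := by omega
        rcases lt_trichotomy m₂.source.c C₁.c with hsc | hsc | hsc
        · refine absurd (hE2 v ⟨m₁, hV₁ (hMfV hm₁), m₂, hV₂ (hM₂V hm₂), hs₁, hs₂, ?_, htlt⟩) hvE
          rw [hsrc₁]
          exact Or.inl hsc
        · rcases not_conflicts ((ih m₂ hm₂).1 hsc) with h | h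
          · by_cases hbe : m₂.source.chain.blocks = C₁.chain.blocks
            · refine pre_trans ?_ hpre₂s
              show C₁.chain.blocks <+: m₂.source.chain.blocks
              rw [hbe]
            · refine absurd (hE2 v ⟨m₁, hV₁ (hMfV hm₁), m₂, hV₂ (hM₂V hm₂), hs₁, hs₂, ?_, htlt⟩) hvE
              rw [hsrc₁]
              exact Or.inr ⟨hsc, height_lt_of_proper h hbe⟩
          · exact pre_trans h hpre₂s
        · exact pre_trans ((ih m₂ hm₂).2 hsc) hpre₂s
      · obtain ⟨v, hvf, hv₂, hvE⟩ := exists_honest E _ (senders M₂) hack hcard₂ hE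
        obtain ⟨m₂, hm₂, hs₂⟩ := hv₂
        obtain ⟨hval₂, hpre₂s, hpre₂t, htc₂⟩ := hvotes₂ m₂ hm₂
        have hclt : C₁.c < m₂.target.c := by omega
        rcases lt_trichotomy m₂.source.c C₁.c with hsc | hsc | hsc
        · exact absurd (hE3 v ⟨m₂, hV₂ (hM₂V hm₂), ⟨C₁, v⟩, hA₁ hvf, hs₂, rfl, Or.inl hsc, hclt⟩) hvE
        · rcases not_conflicts ((ih m₂ hm₂).1 hsc) with h | h
          · by_cases hbe : m₂.source.chain.blocks = C₁.chain.blocks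
            · refine pre_trans ?_ hpre₂s
              show C₁.chain.blocks <+: m₂.source.chain.blocks
              rw [hbe]
            · exact absurd (hE3 v ⟨m₂, hV₂ (hM₂V hm₂), ⟨C₁, v⟩, hA₁ hvf, hs₂, rfl,
                Or.inr ⟨hsc, height_lt_of_proper h hbe⟩, hclt⟩) hvE
          · exact pre_trans h hpre₂s
        · exact pre_trans ((ih m₂ hm₂).2 hsc) hpre₂s

end AuxAS

/-- accountable safety with acknowledgments. -/
theorem accountable_safety_with_acks
    {n : ℕ} {β : Type} {g : β}
    (V₁ V₂ : Set (FFGVote n β g)) (A₁ A₂ : Set (Ack n β g))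
    (C₁ C₂ : Checkpoint β g)
    (h₁ : FinalizedWithAcks V₁ A₁ C₁) (h₂ : FinalizedWithAcks V₂ A₂ C₂)
    (hconf : C₁.chain.Conflicts C₂.chain) :
    n ≤ 3 * Set.ncard {v : Fin n |
      ViolatesE1 (V₁ ∪ V₂) v ∨ ViolatesE2 (V₁ ∪ V₂) v ∨
      ViolatesE3 (V₁ ∪ V₂) (A₁ ∪ A₂) v} := by
  by_contra hn
  push_neg at hn
  set E : Set (Fin n) := {v : Fin n |
      ViolatesE1 (V₁ ∪ V₂) v ∨ ViolatesE2 (V₁ ∪ V₂) v ∨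
      ViolatesE3 (V₁ ∪ V₂) (A₁ ∪ A₂) v} with hEdef
  have hE : 3 * E.ncard < n := hn
  have hg₁ : C₁ ≠ genesisCheckpoint g := by
    rintro rfl
    exact hconf.1 (genesis_prefix _)
  have hg₂ : C₂ ≠ genesisCheckpoint g := by
    rintro rfl
    exact hconf.2 (genesis_prefix _)
  have hJ₁ : Justified V₁ C₁ := by
    rcases h₁ with ((h | h) | h)
    · exact absurd h hg₁
    · exact h.1
    · exact h.1
  have hJ₂ : Justified V₂ C₂ := by
    rcases h₂ with ((h | h) | h)
    · exact absurd h hg₂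
    · exact h.1
    · exact h.1
  have hE1 : ∀ v, ViolatesE1 (V₁ ∪ V₂) v → v ∈ E := fun v h => Or.inl h
  have hE2 : ∀ v, ViolatesE2 (V₁ ∪ V₂) v → v ∈ E := fun v h => Or.inr (Or.inl h)
  have hE3 : ∀ v, ViolatesE3 (V₁ ∪ V₂) (A₁ ∪ A₂) v → v ∈ E := fun v h => Or.inr (Or.inr h)
  rcases lt_trichotomy C₁.c C₂.c with h | h | h
  · exact hconf.1 ((key Set.subset_union_left Set.subset_union_right Set.subset_union_left
      hE1 hE2 hE3 hE C₁ h₁ hJ₂).2 h)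
  · exact ((key Set.subset_union_left Set.subset_union_right Set.subset_union_left
      hE1 hE2 hE3 hE C₁ h₁ hJ₂).1 h.symm) ⟨hconf.2, hconf.1⟩
  · exact hconf.2 ((key Set.subset_union_right Set.subset_union_left Set.subset_union_right
      hE1 hE2 hE3 hE C₂ h₂ hJ₁).2 h)
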